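/- arXiv:1508.07594 — 2 statements merged into one kernel-verified Lean document; each statement's English description precedes it below -/
import Mathlib

section
/- Let P ⊆ ℝ^d be a generalized polyhedron and let v ∈ P be a point that is not an algebraic vertex of P. Let n be a unit vector, let h = {x ∈ ℝ^d : ⟨n,x⟩ = ⟨n,v⟩} be the hyperplane through v with normal n, and let C = tcone(P,v). Then the signed section of the indicator function [C] by h, i.e. the function x ↦ lim_{ε→0⁺}[C](x+εn) − lim_{ε→0⁺}[C](x−εn) (defined at those x ∈ h where both limits exist, which is almost every x ∈ h with respect to (d−1)-dimensional Hausdorff measure on h), agrees almost everywhere on h with a finite real linear combination of indicator functions of line-cones contained in h (a line-cone in h being a finite union of convex polyhedra contained in h that is invariant under translation by some nonzero vector parallel to h). -/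
open MeasureTheory Filter Topology RealInnerProductSpace

noncomputable section

/-- Euclidean space `ℝ^d`. -/
abbrev Euc (d : ℕ) := EuclideanSpace ℝ (Fin d)

/-- A convex polyhedron: an intersection of finitely many closed half-spaces. -/
def IsConvexPolyhedron {d : ℕ} (P : Set (Euc d)) : Prop :=
  ∃ (n : ℕ) (a : Fin n → Euc d) (b : Fin n → ℝ),
    (∀ i, a i ≠ 0) ∧ P = {x | ∀ i, ⟪a i, x⟫ ≤ b i}

/-- A generalized polyhedron: a finite union of convex polyhedra. -/
def IsGenPolyhedron {d : ℕ} (P : Set (Euc d)) : Prop :=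
  ∃ (n : ℕ) (Q : Fin n → Set (Euc d)),
    (∀ i, IsConvexPolyhedron (Q i)) ∧ P = ⋃ i, Q i

/-- A line-cone: a generalized polyhedron invariant under translation by every
multiple of some nonzero vector `u`. -/
def IsLineCone {d : ℕ} (D : Set (Euc d)) : Prop :=
  IsGenPolyhedron D ∧ ∃ u : Euc d, u ≠ 0 ∧ ∀ t : ℝ, (fun x => x + t • u) '' D = D

/-- The tangent cone of `P` at `v`: points `y = v + x` such that `v + ε • x ∈ P`
for all sufficiently small `ε > 0`. -/
def tcone {d : ℕ} (P : Set (Euc d)) (v : Euc d) : Set (Euc d) :=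
  {y | ∃ ε₀ > (0 : ℝ), ∀ ε : ℝ, 0 < ε → ε ≤ ε₀ → v + ε • (y - v) ∈ P}

/-- The real-valued indicator function of a set. -/
def ind {d : ℕ} (S : Set (Euc d)) : Euc d → ℝ := S.indicator fun _ => 1

/-- `f` agrees Lebesgue-almost everywhere with a finite real linear combination of
indicator functions of line-cones. -/
def IsLinCombOfLineCones {d : ℕ} (f : Euc d → ℝ) : Prop :=
  ∃ (k : ℕ) (α : Fin k → ℝ) (D : Fin k → Set (Euc d)),
    (∀ i, IsLineCone (D i)) ∧ f =ᵐ[volume] fun x => ∑ i, α i * ind (D i) x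

/-- `v` is an algebraic vertex of `P`: `v ∈ P` and the indicator function of the
tangent cone of `P` at `v` is not a.e. equal to a finite real linear combination of
indicator functions of line-cones. -/
def IsAlgebraicVertex {d : ℕ} (P : Set (Euc d)) (v : Euc d) : Prop :=
  v ∈ P ∧ ¬ IsLinCombOfLineCones (ind (tcone P v))

/-- A line-cone contained in the hyperplane `h` with normal `n`: a finite union of
convex polyhedra contained in `h` that is invariant under translation by every multiple
of some nonzero vector `u` parallel to `h`. -/
def IsLineConeIn {d : ℕ} (h : Set (Euc d)) (n : Euc d) (D : Set (Euc d)) : Prop :=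
  (∃ (m : ℕ) (Q : Fin m → Set (Euc d)),
      (∀ i, IsConvexPolyhedron (Q i) ∧ Q i ⊆ h) ∧ D = ⋃ i, Q i) ∧
  ∃ u : Euc d, u ≠ 0 ∧ ⟪n, u⟫ = 0 ∧ ∀ t : ℝ, (fun x => x + t • u) '' D = D

open Set
open scoped ENNReal NNReal Classical

variable {d : ℕ}

open scoped Classical

lemma ind_apply (S : Set (Euc d)) (x : Euc d) : ind S x = if x ∈ S then 1 else 0 := by
  by_cases h : x ∈ S <;> simp [ind, h]

lemma ev_basis {p : ℝ → Prop} :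
    (∀ᶠ ε in 𝓝[>] (0:ℝ), p ε) ↔ ∃ δ > 0, ∀ ε, 0 < ε → ε < δ → p ε := by
  rw [(nhdsGT_basis (0:ℝ)).eventually_iff]
  constructor
  · rintro ⟨δ, hδ, hs⟩; exact ⟨δ, hδ, fun ε h1 h2 => hs ⟨h1, h2⟩⟩
  · rintro ⟨δ, hδ, hs⟩; exact ⟨δ, hδ, fun ε hε => hs ε hε.1 hε.2⟩

lemma convex_dichotomy {I : Set ℝ} (hI : Convex ℝ I) :
    (∀ᶠ ε in 𝓝[>] (0:ℝ), ε ∈ I) ∨ (∀ᶠ ε in 𝓝[>] (0:ℝ), ε ∉ I) := by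
  by_cases h : ∀ᶠ ε in 𝓝[>] (0:ℝ), ε ∉ I
  · exact Or.inr h
  · left
    rw [ev_basis] at h
    push_neg at h
    obtain ⟨p, hp0, hp1, hpI⟩ := h 1 one_pos
    rw [ev_basis]
    refine ⟨p, hp0, fun ε hε0 hεp => ?_⟩
    obtain ⟨a, ha0, haε, haI⟩ := h ε hε0
    exact hI.ordConnected.out haI hpI ⟨le_of_lt haε, le_of_lt hεp⟩

lemma inner_isLinearMap (a : Euc d) : IsLinearMap ℝ (fun x : Euc d => ⟪a, x⟫) :=
  ⟨fun x y => inner_add_right a x y, fun c x => real_inner_smul_right a x c⟩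

lemma convexPolyhedron_convex {P : Set (Euc d)} (hP : IsConvexPolyhedron P) : Convex ℝ P := by
  obtain ⟨k, a, b, -, rfl⟩ := hP
  have : {x : Euc d | ∀ i, ⟪a i, x⟫ ≤ b i} = ⋂ i, {x | ⟪a i, x⟫ ≤ b i} := by
    ext x; simp
  rw [this]
  exact convex_iInter fun i => convex_halfSpace_le (inner_isLinearMap (a i)) (b i)

lemma convexPolyhedron_closed {P : Set (Euc d)} (hP : IsConvexPolyhedron P) : IsClosed P := by
  obtain ⟨k, a, b, -, rfl⟩ := hP
  have : {x : Euc d | ∀ i, ⟪a i, x⟫ ≤ b i} = ⋂ i, {x | ⟪a i, x⟫ ≤ b i} := by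
    ext x; simp
  rw [this]
  exact isClosed_iInter fun i =>
    isClosed_le (continuous_const.inner continuous_id) continuous_const

/-- eventual membership along a ray -/
def evIn (S : Set (Euc d)) (x m : Euc d) : Prop := ∀ᶠ ε in 𝓝[>] (0:ℝ), x + ε • m ∈ S

lemma line_convex {Q : Set (Euc d)} (hQ : Convex ℝ Q) (x m : Euc d) :
    Convex ℝ {ε : ℝ | x + ε • m ∈ Q} := by
  intro ε₁ h1 ε₂ h2 s t hs ht hst
  simp only [Set.mem_setOf_eq, smul_eq_mul] at *
  have : s • (x + ε₁ • m) + t • (x + ε₂ • m) = (s + t) • x + (s * ε₁ + t * ε₂) • m := by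
    module
  rw [hst, one_smul] at this
  rw [← this]
  exact hQ h1 h2 hs ht hst

lemma evIn_or_evOut {Q : Set (Euc d)} (hQ : Convex ℝ Q) (x m : Euc d) :
    evIn Q x m ∨ (∀ᶠ ε in 𝓝[>] (0:ℝ), x + ε • m ∉ Q) :=
  convex_dichotomy (line_convex hQ x m)

lemma evIn_iUnion {k : ℕ} {Q : Fin k → Set (Euc d)} (hQ : ∀ j, Convex ℝ (Q j)) (x m : Euc d) :
    evIn (⋃ j, Q j) x m ↔ ∃ j, evIn (Q j) x m := by
  constructor
  · intro h
    by_contra hc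
    push_neg at hc
    have hout : ∀ j, ∀ᶠ ε in 𝓝[>] (0:ℝ), x + ε • m ∉ Q j := fun j =>
      (evIn_or_evOut (hQ j) x m).resolve_left (hc j)
    have : ∀ᶠ ε in 𝓝[>] (0:ℝ), ∀ j, x + ε • m ∉ Q j := eventually_all.2 hout
    obtain ⟨ε, hε1, hε2⟩ := (h.and this).exists
    obtain ⟨j, hj⟩ := Set.mem_iUnion.1 hε1
    exact hε2 j hj
  · rintro ⟨j, hj⟩
    exact hj.mono fun ε h => Set.mem_iUnion.2 ⟨j, h⟩

lemma genPolyhedron_ev_dichotomy {S : Set (Euc d)} (hS : IsGenPolyhedron S) (x m : Euc d) :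
    evIn S x m ∨ (∀ᶠ ε in 𝓝[>] (0:ℝ), x + ε • m ∉ S) := by
  obtain ⟨k, Q, hQ, rfl⟩ := hS
  by_cases h : evIn (⋃ j, Q j) x m
  · exact Or.inl h
  · right
    rw [evIn_iUnion (fun j => convexPolyhedron_convex (hQ j))] at h
    push_neg at h
    have hout : ∀ j, ∀ᶠ ε in 𝓝[>] (0:ℝ), x + ε • m ∉ Q j := fun j =>
      (evIn_or_evOut (convexPolyhedron_convex (hQ j)) x m).resolve_left (h j)
    have := eventually_all.2 hout
    exact this.mono fun ε hε hmem => by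
      obtain ⟨j, hj⟩ := Set.mem_iUnion.1 hmem; exact hε j hj

open Classical in
/-- the eventual value of the indicator along a ray -/
def secv (S : Set (Euc d)) (x m : Euc d) : ℝ := if evIn S x m then 1 else 0

lemma ev_ind_eq_secv {S : Set (Euc d)} (hS : IsGenPolyhedron S) (x m : Euc d) :
    ∀ᶠ ε in 𝓝[>] (0:ℝ), ind S (x + ε • m) = secv S x m := by
  rcases genPolyhedron_ev_dichotomy hS x m with h | h
  · filter_upwards [h] with ε hε
    rw [ind_apply, if_pos hε, secv, if_pos h]
  · have hn : ¬ evIn S x m := by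
      intro hin
      obtain ⟨ε, h1, h2⟩ := (hin.and h).exists
      exact h2 h1
    filter_upwards [h] with ε hε
    rw [ind_apply, if_neg hε, secv, if_neg hn]

lemma tendsto_ind_secv {S : Set (Euc d)} (hS : IsGenPolyhedron S) (x m : Euc d) :
    Tendsto (fun ε : ℝ => ind S (x + ε • m)) (𝓝[>] 0) (𝓝 (secv S x m)) :=
  tendsto_const_nhds.congr' ((ev_ind_eq_secv hS x m).mono fun _ h => h.symm)

lemma inner_line (a x m : Euc d) (ε : ℝ) : ⟪a, x + ε • m⟫ = ⟪a, x⟫ + ε * ⟪a, m⟫ := by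
  rw [inner_add_right, real_inner_smul_right]

lemma tendsto_affine (c s : ℝ) :
    Tendsto (fun ε : ℝ => c + ε * s) (𝓝[>] 0) (𝓝 c) := by
  have : Tendsto (fun ε : ℝ => c + ε * s) (𝓝 0) (𝓝 (c + 0 * s)) := by
    exact (continuous_const.add (continuous_id.mul continuous_const)).tendsto 0
  simpa using this.mono_left nhdsWithin_le_nhds

lemma tendsto_affine_sub (c s : ℝ) :
    Tendsto (fun ε : ℝ => c - ε * s) (𝓝[>] 0) (𝓝 c) := by
  simpa [sub_eq_add_neg, neg_mul, mul_comm] using tendsto_affine c (-s)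

lemma evIn_halfspaces {k : ℕ} (a : Fin k → Euc d) (b : Fin k → ℝ) (x m : Euc d) :
    (∀ᶠ ε in 𝓝[>] (0:ℝ), ∀ l, ⟪a l, x + ε • m⟫ ≤ b l) ↔
      ∀ l, ⟪a l, x⟫ < b l ∨ (⟪a l, x⟫ = b l ∧ ⟪a l, m⟫ ≤ 0) := by
  constructor
  · intro h l
    rcases lt_trichotomy (⟪a l, x⟫) (b l) with hlt | heq | hgt
    · exact Or.inl hlt
    · refine Or.inr ⟨heq, ?_⟩
      obtain ⟨ε, hε, hε0⟩ := (h.and self_mem_nhdsWithin).exists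
      have := hε l
      rw [inner_line, heq] at this
      have h2 : ε * ⟪a l, m⟫ ≤ 0 := by linarith
      exact nonpos_of_mul_nonpos_right h2 hε0
    · exfalso
      have hev : ∀ᶠ ε in 𝓝[>] (0:ℝ), b l < ⟪a l, x + ε • m⟫ := by
        have := (tendsto_affine (⟪a l, x⟫) (⟪a l, m⟫)).eventually_const_lt hgt
        exact this.mono fun ε hε => by rw [inner_line]; exact hε
      obtain ⟨ε, h1, h2⟩ := (h.and hev).exists
      exact absurd (h1 l) (not_le.2 h2)
  · intro h
    rw [eventually_all]
    intro l
    rcases h l with hlt | ⟨heq, hm⟩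
    · have := (tendsto_affine (⟪a l, x⟫) (⟪a l, m⟫)).eventually_lt_const hlt
      exact this.mono fun ε hε => by rw [inner_line]; exact le_of_lt hε
    · filter_upwards [self_mem_nhdsWithin] with ε (hε : (0:ℝ) < ε)
      rw [inner_line, heq]
      nlinarith

lemma mem_tcone_iff {P : Set (Euc d)} {v y : Euc d} :
    y ∈ tcone P v ↔ evIn P v (y - v) := by
  constructor
  · rintro ⟨ε₀, hε₀, h⟩
    rw [evIn, ev_basis]
    exact ⟨ε₀, hε₀, fun ε h1 h2 => h ε h1 (le_of_lt h2)⟩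
  · intro h
    rw [evIn, ev_basis] at h
    obtain ⟨δ, hδ, h⟩ := h
    exact ⟨δ/2, by linarith, fun ε h1 h2 => h ε h1 (by linarith)⟩

lemma tcone_empty_of_not_mem {Q : Set (Euc d)} (hQc : IsClosed Q) {v : Euc d} (hv : v ∉ Q) :
    tcone Q v = ∅ := by
  ext y
  simp only [Set.mem_empty_iff_false, iff_false]
  intro hy
  rw [mem_tcone_iff] at hy
  apply hv
  have htd : Tendsto (fun ε : ℝ => v + ε • (y - v)) (𝓝[>] 0) (𝓝 v) := by
    have : Tendsto (fun ε : ℝ => v + ε • (y - v)) (𝓝 0) (𝓝 (v + (0:ℝ) • (y - v))) :=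
      (continuous_const.add (continuous_id.smul continuous_const)).tendsto 0
    simpa using this.mono_left nhdsWithin_le_nhds
  rw [← hQc.closure_eq]
  exact mem_closure_of_tendsto htd hy

lemma tcone_convexPolyhedron {k : ℕ} (a : Fin k → Euc d) (b : Fin k → ℝ) (v : Euc d)
    (hv : ∀ l, ⟪a l, v⟫ ≤ b l) :
    tcone {x : Euc d | ∀ l, ⟪a l, x⟫ ≤ b l} v
      = {y : Euc d | ∀ l, ⟪a l, v⟫ = b l → ⟪a l, y⟫ ≤ ⟪a l, v⟫} := by
  ext y
  rw [mem_tcone_iff]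
  have : evIn {x : Euc d | ∀ l, ⟪a l, x⟫ ≤ b l} v (y - v) ↔
      (∀ᶠ ε in 𝓝[>] (0:ℝ), ∀ l, ⟪a l, v + ε • (y - v)⟫ ≤ b l) := Iff.rfl
  rw [this, evIn_halfspaces]
  constructor
  · intro h l heq
    rcases h l with hlt | ⟨-, hm⟩
    · exact absurd heq (ne_of_lt hlt)
    · rw [inner_sub_right] at hm; linarith
  · intro h l
    rcases lt_or_eq_of_le (hv l) with hlt | heq
    · exact Or.inl hlt
    · refine Or.inr ⟨heq, ?_⟩
      rw [inner_sub_right]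
      have := h l heq
      linarith

lemma isConvexPolyhedron_tcone_of_mem {Q : Set (Euc d)} (hQ : IsConvexPolyhedron Q)
    {v : Euc d} (hv : v ∈ Q) : IsConvexPolyhedron (tcone Q v) := by
  obtain ⟨k, a, b, ha, rfl⟩ := hQ
  rw [tcone_convexPolyhedron a b v hv]
  -- reindex over the tight constraints
  classical
  let T := {l : Fin k // ⟪a l, v⟫ = b l}
  let e := (Fintype.equivFin T).symm
  refine ⟨Fintype.card T, fun i => a (e i).1, fun i => ⟪a (e i).1, v⟫,
    fun i => ha _, ?_⟩
  ext y
  simp only [Set.mem_setOf_eq]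
  constructor
  · intro h i
    exact h (e i).1 (e i).2
  · intro h l heq
    have := h ((Fintype.equivFin T) ⟨l, heq⟩)
    simpa [e] using this

lemma tcone_iUnion {k : ℕ} (Q : Fin k → Set (Euc d)) (hQ : ∀ j, IsConvexPolyhedron (Q j))
    (v : Euc d) : tcone (⋃ j, Q j) v = ⋃ j, tcone (Q j) v := by
  ext y
  rw [mem_tcone_iff, evIn_iUnion (fun j => convexPolyhedron_convex (hQ j))]
  simp only [Set.mem_iUnion, mem_tcone_iff]

lemma isGenPolyhedron_tcone {P : Set (Euc d)} (hP : IsGenPolyhedron P) (v : Euc d) :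
    IsGenPolyhedron (tcone P v) := by
  obtain ⟨k, Q, hQ, rfl⟩ := hP
  rw [tcone_iUnion Q hQ v]
  classical
  let T := {j : Fin k // v ∈ Q j}
  let e := (Fintype.equivFin T).symm
  refine ⟨Fintype.card T, fun i => tcone (Q (e i).1) v,
    fun i => isConvexPolyhedron_tcone_of_mem (hQ _) (e i).2, ?_⟩
  ext y
  simp only [Set.mem_iUnion]
  constructor
  · rintro ⟨j, hj⟩
    have hvQ : v ∈ Q j := by
      by_contra hvn
      rw [tcone_empty_of_not_mem (convexPolyhedron_closed (hQ j)) hvn] at hj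
      exact hj
    exact ⟨(Fintype.equivFin T) ⟨j, hvQ⟩, by simpa [e] using hj⟩
  · rintro ⟨i, hi⟩
    exact ⟨(e i).1, hi⟩

open Module Submodule in
lemma slice_null {n : Euc d} (hn : ‖n‖ = 1) {a : Euc d} (ha : ∀ c : ℝ, a ≠ c • n)
    (b q : ℝ) :
    (μH[(d:ℝ)-1] : Measure (Euc d)) ({x | ⟪a, x⟫ = b} ∩ {x | ⟪n, x⟫ = q}) = 0 := by
  set W : Set (Euc d) := {x | ⟪a, x⟫ = b} ∩ {x | ⟪n, x⟫ = q} with hW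
  rcases W.eq_empty_or_nonempty with hE | ⟨x₀, hx₀⟩
  · rw [hE]; exact measure_empty
  have hn0 : n ≠ 0 := by intro h; rw [h, norm_zero] at hn; norm_num at hn
  have hli : LinearIndependent ℝ ![a, n] := by
    rw [linearIndependent_fin2]
    refine ⟨hn0, fun c h => ha c h.symm⟩
  set K : Submodule ℝ (Euc d) := span ℝ (Set.range ![a, n]) with hK
  have hKfin : finrank ℝ K = 2 := by
    rw [hK, finrank_span_eq_card hli]; simp
  have hd2 : 2 ≤ d := by
    have h1 := Submodule.finrank_le K
    rw [hKfin, finrank_euclideanSpace_fin] at h1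
    exact h1
  have hVfin : finrank ℝ Kᗮ = d - 2 := by
    have := Submodule.finrank_add_finrank_orthogonal K
    rw [hKfin, finrank_euclideanSpace_fin] at this
    omega
  -- W is contained in x₀ + Kᗮ
  set f : Kᗮ → Euc d := fun y => x₀ + (y : Euc d) with hf
  have hiso : Isometry f := by
    apply Isometry.of_dist_eq
    intro y z
    rw [hf, Subtype.dist_eq, dist_eq_norm, dist_eq_norm]
    congr 1
    exact add_sub_add_left_eq_sub _ _ _
  have hWr : W ⊆ Set.range f := by
    intro x hx
    have h1 : x - x₀ ∈ Kᗮ := by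
      rw [Submodule.mem_orthogonal]
      intro u hu
      induction hu using Submodule.span_induction with
      | mem u hu =>
        obtain ⟨i, rfl⟩ := hu
        have hxa : ⟪a, x - x₀⟫ = 0 := by
          rw [inner_sub_right, hx.1, hx₀.1, sub_self]
        have hxn : ⟪n, x - x₀⟫ = 0 := by
          rw [inner_sub_right, hx.2, hx₀.2, sub_self]
        fin_cases i
        · simpa using hxa
        · simpa using hxn
      | zero => simp [inner_zero_left]
      | add u w _ _ h1 h2 => rw [inner_add_left, h1, h2, add_zero]
      | smul c u _ h1 => rw [inner_smul_left, h1, mul_zero]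
    exact ⟨⟨x - x₀, h1⟩, by simp [hf]⟩
  have hdim : dimH W ≤ (d - 2 : ℕ) := by
    calc dimH W ≤ dimH (Set.range f) := dimH_mono hWr
    _ = dimH (f '' Set.univ) := by rw [Set.image_univ]
    _ ≤ dimH (Set.univ : Set Kᗮ) := by
        simpa using hiso.lipschitz.dimH_image_le Set.univ
    _ = (d - 2 : ℕ) := by rw [Real.dimH_univ_eq_finrank, hVfin]
  set r : ℝ≥0 := ((d - 1 : ℕ) : ℝ≥0) with hr
  have hrr : ((d:ℝ) - 1) = (r : ℝ) := by
    rw [hr, NNReal.coe_natCast, Nat.cast_sub (by omega : 1 ≤ d)]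
    norm_num
  rw [hrr]
  apply hausdorffMeasure_of_dimH_lt
  apply lt_of_le_of_lt hdim
  rw [hr]
  have : ((d - 2 : ℕ) : ℝ≥0∞) < ((d - 1 : ℕ) : ℝ≥0∞) := by
    exact_mod_cast Nat.sub_lt_sub_left (by omega) (by omega)
  simpa using this

lemma continuous_inner_const (a : Euc d) : Continuous fun x : Euc d => ⟪a, x⟫ :=
  continuous_const.inner continuous_id

lemma hset_measurable (n : Euc d) (q : ℝ) : MeasurableSet {x : Euc d | ⟪n, x⟫ = q} :=
  (isClosed_eq (continuous_inner_const n) continuous_const).measurableSet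

lemma slice_measurable (a : Euc d) (b : ℝ) : MeasurableSet {x : Euc d | ⟪a, x⟫ = b} :=
  (isClosed_eq (continuous_inner_const a) continuous_const).measurableSet

/-- A function determined by the sign pattern w.r.t. a finite family of hyperplanes. -/
def SignDet (A : Finset (Euc d × ℝ)) (f : Euc d → ℝ) : Prop :=
  ∀ x y : Euc d,
    (∀ p ∈ A, (⟪p.1, x⟫ < p.2 ↔ ⟪p.1, y⟫ < p.2) ∧ (⟪p.1, x⟫ = p.2 ↔ ⟪p.1, y⟫ = p.2)) →
    f x = f y

lemma SignDet.mono {A B : Finset (Euc d × ℝ)} {f : Euc d → ℝ} (hAB : A ⊆ B)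
    (hf : SignDet A f) : SignDet B f :=
  fun x y hxy => hf x y fun p hp => hxy p (hAB hp)

lemma signDet_genPolyhedron {S : Set (Euc d)} (hS : IsGenPolyhedron S) :
    ∃ A : Finset (Euc d × ℝ), (∀ p ∈ A, p.1 ≠ 0) ∧ SignDet A (ind S) := by
  classical
  obtain ⟨k, Q, hQ, rfl⟩ := hS
  choose kk a b ha hrep using hQ
  refine ⟨Finset.univ.biUnion fun j => Finset.image (fun l => (a j l, b j l)) Finset.univ,
    ?_, ?_⟩
  · intro p hp
    simp only [Finset.mem_biUnion, Finset.mem_image, Finset.mem_univ, true_and] at hp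
    obtain ⟨j, l, rfl⟩ := hp
    exact ha j l
  · intro x y hxy
    have hmem : ∀ j, x ∈ Q j ↔ y ∈ Q j := by
      intro j
      rw [hrep j]
      simp only [Set.mem_setOf_eq]
      constructor <;> intro h l
      · have hp := hxy (a j l, b j l) (by
          simp only [Finset.mem_biUnion, Finset.mem_image, Finset.mem_univ, true_and]
          exact ⟨j, l, rfl⟩)
        rcases lt_or_eq_of_le (h l) with h1 | h1
        · exact le_of_lt (hp.1.1 h1)
        · exact le_of_eq (hp.2.1 h1)
      · have hp := hxy (a j l, b j l) (by
          simp only [Finset.mem_biUnion, Finset.mem_image, Finset.mem_univ, true_and]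
          exact ⟨j, l, rfl⟩)
        rcases lt_or_eq_of_le (h l) with h1 | h1
        · exact le_of_lt (hp.1.2 h1)
        · exact le_of_eq (hp.2.2 h1)
    have : x ∈ ⋃ j, Q j ↔ y ∈ ⋃ j, Q j := by
      simp only [Set.mem_iUnion]
      exact exists_congr fun j => hmem j
    rw [ind_apply, ind_apply]
    by_cases hx : x ∈ ⋃ j, Q j
    · rw [if_pos hx, if_pos (this.1 hx)]
    · rw [if_neg hx, if_neg (fun h => hx (this.2 h))]

lemma signDet_combo {A : Finset (Euc d × ℝ)} {k : ℕ} {F : Fin k → Euc d → ℝ} (α : Fin k → ℝ)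
    (hF : ∀ i, SignDet A (F i)) : SignDet A (fun x => ∑ i, α i * F i x) :=
  fun x y hxy => Finset.sum_congr rfl fun i _ => by rw [hF i x y hxy]

lemma eq_of_signDet_ae_eq {A : Finset (Euc d × ℝ)} {f g : Euc d → ℝ}
    (hf : SignDet A f) (hg : SignDet A g) (hfg : f =ᵐ[volume] g) {x : Euc d}
    (hx : ∀ p ∈ A, ⟪p.1, x⟫ ≠ p.2) : f x = g x := by
  classical
  set U : Set (Euc d) :=
    ⋂ p ∈ A, (if ⟪p.1, x⟫ < p.2 then {y : Euc d | ⟪p.1, y⟫ < p.2}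
      else {y : Euc d | p.2 < ⟪p.1, y⟫}) with hU
  have hUopen : IsOpen U := by
    rw [hU]
    refine isOpen_biInter_finset fun p _ => ?_
    split_ifs
    · exact isOpen_lt (continuous_inner_const p.1) continuous_const
    · exact isOpen_lt continuous_const (continuous_inner_const p.1)
  have hxU : x ∈ U := by
    rw [hU]
    refine Set.mem_iInter₂.2 fun p hp => ?_
    rcases lt_trichotomy (⟪p.1, x⟫) p.2 with h1 | h1 | h1
    · rw [if_pos h1]; exact h1
    · exact absurd h1 (hx p hp)
    · rw [if_neg (not_lt.2 (le_of_lt h1))]; exact h1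
  have hpat : ∀ y ∈ U, ∀ p ∈ A,
      (⟪p.1, x⟫ < p.2 ↔ ⟪p.1, y⟫ < p.2) ∧ (⟪p.1, x⟫ = p.2 ↔ ⟪p.1, y⟫ = p.2) := by
    intro y hy p hp
    have hyp := Set.mem_iInter₂.1 hy p hp
    by_cases h1 : ⟪p.1, x⟫ < p.2
    · rw [if_pos h1] at hyp
      exact ⟨iff_of_true h1 hyp, iff_of_false (hx p hp) (ne_of_lt hyp)⟩
    · rw [if_neg h1] at hyp
      exact ⟨iff_of_false h1 (not_lt.2 (le_of_lt hyp)),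
        iff_of_false (hx p hp) (ne_of_gt hyp)⟩
  have hpos : 0 < volume U := hUopen.measure_pos volume ⟨x, hxU⟩
  have hex : ∃ y ∈ U, f y = g y := by
    by_contra hc
    push_neg at hc
    have hsub : U ⊆ {y | f y ≠ g y} := fun y hy => hc y hy
    have : volume U = 0 := measure_mono_null hsub hfg
    exact absurd this (ne_of_gt hpos)
  obtain ⟨y, hyU, hyfg⟩ := hex
  rw [hf x y (hpat y hyU), hyfg, ← hg x y (hpat y hyU)]

lemma affine_eq_convex (c s b : ℝ) : Convex ℝ {ε : ℝ | c + ε * s = b} := by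
  intro ε₁ h1 ε₂ h2 t u ht hu htu
  simp only [Set.mem_setOf_eq, smul_eq_mul] at *
  have hu' : u = 1 - t := by linarith
  subst hu'
  linear_combination t * h1 + (1 - t) * h2

lemma freq_off_H {A : Finset (Euc d × ℝ)} {n : Euc d} {q : ℝ} (m : Euc d)
    (hgood : ∀ p ∈ A, ⟪p.1, m⟫ = 0 →
      (μH[(d:ℝ)-1] : Measure (Euc d)) ({x | ⟪p.1, x⟫ = p.2} ∩ {x | ⟪n, x⟫ = q}) = 0) :
    ∀ᵐ x ∂((μH[(d:ℝ)-1] : Measure (Euc d)).restrict {x : Euc d | ⟪n, x⟫ = q}),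
      ∃ᶠ ε in 𝓝[>] (0:ℝ), ∀ p ∈ A, ⟪p.1, x + ε • m⟫ ≠ p.2 := by
  classical
  set ν := (μH[(d:ℝ)-1] : Measure (Euc d)).restrict {x : Euc d | ⟪n, x⟫ = q} with hν
  have hclaim : ∀ x : Euc d, ¬ (∃ᶠ ε in 𝓝[>] (0:ℝ), ∀ p ∈ A, ⟪p.1, x + ε • m⟫ ≠ p.2) →
      ∃ p ∈ A, ⟪p.1, m⟫ = 0 ∧ ⟪p.1, x⟫ = p.2 := by
    intro x hx
    rw [Filter.not_frequently] at hx
    push_neg at hx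
    -- hx : ∀ᶠ ε, ∃ p ∈ A, ⟪p.1, x + ε • m⟫ = p.2
    have hpig : ∃ p ∈ A, ∀ᶠ ε in 𝓝[>] (0:ℝ), ⟪p.1, x⟫ + ε * ⟪p.1, m⟫ = p.2 := by
      by_contra hc
      push_neg at hc
      have hout : ∀ p ∈ A, ∀ᶠ ε in 𝓝[>] (0:ℝ), ¬ (⟪p.1, x⟫ + ε * ⟪p.1, m⟫ = p.2) := by
        intro p hp
        have := convex_dichotomy (I := {ε : ℝ | ⟪p.1, x⟫ + ε * ⟪p.1, m⟫ = p.2})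
          (affine_eq_convex _ _ _)
        exact this.resolve_left (Filter.not_eventually.2 (hc p hp))
      have hall := (eventually_all_finset A).2 hout
      obtain ⟨ε, h1, h2⟩ := (hx.and hall).exists
      obtain ⟨p, hp, hpe⟩ := h1
      rw [inner_line] at hpe
      exact h2 p hp hpe
    obtain ⟨p, hp, hpe⟩ := hpig
    rw [ev_basis] at hpe
    obtain ⟨δ, hδ, hev⟩ := hpe
    have h1 := hev (δ/2) (by linarith) (by linarith)
    have h2 := hev (δ/3) (by linarith) (by linarith)
    have hs : ⟪p.1, m⟫ = 0 := by
      by_contra hs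
      have : δ/2 = δ/3 := by
        have := sub_eq_zero.2 (h1.trans h2.symm)
        rw [show ⟪p.1,x⟫ + δ/2 * ⟪p.1,m⟫ - (⟪p.1,x⟫ + δ/3 * ⟪p.1,m⟫)
          = (δ/2 - δ/3) * ⟪p.1,m⟫ by ring] at this
        have := mul_eq_zero.1 this
        rcases this with h | h
        · linarith [sub_eq_zero.1 h]
        · exact absurd h hs
      linarith
    refine ⟨p, hp, hs, ?_⟩
    rw [hs, mul_zero, add_zero] at h1
    exact h1
  rw [ae_iff]
  have hnull : ν (⋃ p ∈ (A.filter fun p => ⟪p.1, m⟫ = 0), {x : Euc d | ⟪p.1, x⟫ = p.2}) = 0 := by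
    rw [← Finset.set_biUnion_coe, measure_biUnion_null_iff (Finset.countable_toSet _)]
    intro p hp
    rw [Finset.mem_coe, Finset.mem_filter] at hp
    rw [hν, Measure.restrict_apply (slice_measurable p.1 p.2)]
    exact hgood p hp.1 hp.2
  refine measure_mono_null ?_ hnull
  intro x hx
  simp only [Set.mem_setOf_eq] at hx
  obtain ⟨p, hp, hpm, hpx⟩ := hclaim x hx
  exact Set.mem_biUnion (Finset.mem_filter.2 ⟨hp, hpm⟩) hpx

section CaseA

variable {n : Euc d} {q : ℝ}

/-- Closure of the section-limit set of one convex polyhedron, within the hyperplane. -/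
lemma caseA_piece (hn : ‖n‖ = 1) {k : ℕ} (a : Fin k → Euc d) (b : Fin k → ℝ) (m : Euc d)
    (q : ℝ) :
    ∃ Pj : Set (Euc d), IsConvexPolyhedron Pj ∧ Pj ⊆ {x : Euc d | ⟪n, x⟫ = q} ∧
      Pj = closure {x : Euc d | ⟪n, x⟫ = q ∧
        ∀ l, ⟪a l, x⟫ < b l ∨ (⟪a l, x⟫ = b l ∧ ⟪a l, m⟫ ≤ 0)} ∧
      ∀ᵐ x ∂((μH[(d:ℝ)-1] : Measure (Euc d)).restrict {x : Euc d | ⟪n, x⟫ = q}),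
        (x ∈ Pj ↔ x ∈ {x : Euc d | ⟪n, x⟫ = q ∧
          ∀ l, ⟪a l, x⟫ < b l ∨ (⟪a l, x⟫ = b l ∧ ⟪a l, m⟫ ≤ 0)}) := by
  classical
  have hn0 : n ≠ 0 := by intro h; rw [h, norm_zero] at hn; norm_num at hn
  have hnn : ⟪n, n⟫ = (1:ℝ) := by
    rw [real_inner_self_eq_norm_mul_norm, hn]; norm_num
  set G : Set (Euc d) := {x : Euc d | ⟪n, x⟫ = q ∧
    ∀ l, ⟪a l, x⟫ < b l ∨ (⟪a l, x⟫ = b l ∧ ⟪a l, m⟫ ≤ 0)} with hG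
  rcases G.eq_empty_or_nonempty with hGe | ⟨x₀, hx₀⟩
  · -- use an explicitly empty polyhedron
    set Pj : Set (Euc d) := {x : Euc d | ∀ i : Fin 2, ⟪![n, -n] i, x⟫ ≤ ![q - 1, -q] i}
      with hPj
    have hPje : Pj = ∅ := by
      ext x
      simp only [hPj, Set.mem_setOf_eq, Set.mem_empty_iff_false, iff_false]
      intro h
      have h0 := h 0
      have h1 := h 1
      simp only [Matrix.cons_val_zero, Matrix.cons_val_one, Matrix.head_cons] at h0 h1
      rw [inner_neg_left] at h1
      linarith
    refine ⟨Pj, ⟨2, ![n, -n], ![q - 1, -q], ?_, rfl⟩, ?_, ?_, ?_⟩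
    · intro i
      fin_cases i
      · exact hn0
      · simpa using hn0
    · rw [hPje]; exact Set.empty_subset _
    · rw [hPje, hGe, closure_empty]
    · refine Filter.Eventually.of_forall fun x => ?_
      rw [hPje, hGe]
  · -- nonempty case
    set c : Fin k → ℝ := fun l => ⟪n, a l⟫ with hc
    set a' : Fin k → Euc d := fun l => a l - c l • n with ha'
    set b' : Fin k → ℝ := fun l => b l - c l * q with hb'
    have hna' : ∀ l, ⟪n, a' l⟫ = 0 := by
      intro l
      rw [ha']
      simp only [inner_sub_right, real_inner_smul_right, hnn, hc]
      ring
    have hid : ∀ l, ∀ x : Euc d, ⟪n, x⟫ = q → ⟪a l, x⟫ = ⟪a' l, x⟫ + c l * q := by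
      intro l x hx
      rw [ha']
      simp only [inner_sub_left, real_inner_smul_left]
      rw [hx]
      ring
    have ha'n : ∀ l, a' l = 0 → ∀ x : Euc d, ⟪n, x⟫ = q → ⟪a l, x⟫ = c l * q := by
      intro l h0 x hx
      rw [hid l x hx, h0, inner_zero_left, zero_add]
    set A' : Fin k → Euc d := fun l => if a' l = 0 then n else a' l with hA'
    set B' : Fin k → ℝ := fun l => if a' l = 0 then q else b' l with hB'
    set Pj : Set (Euc d) := {x : Euc d | ⟪n, x⟫ = q ∧ ∀ l, ⟪A' l, x⟫ ≤ B' l} with hPj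
    have hGP : G ⊆ Pj := by
      rintro x ⟨hxh, hxc⟩
      refine ⟨hxh, fun l => ?_⟩
      simp only [hA', hB']
      split_ifs with h0
      · rw [hxh]
      · have hab : ⟪a l, x⟫ ≤ b l := by
          rcases hxc l with h | h
          · exact le_of_lt h
          · exact le_of_eq h.1
        simp only [hb']
        have := hid l x hxh
        linarith
    have hPcl : IsClosed Pj := by
      have : Pj = {x : Euc d | ⟪n, x⟫ = q} ∩ ⋂ l, {x : Euc d | ⟪A' l, x⟫ ≤ B' l} := by
        ext x; simp [hPj, Set.mem_iInter]
      rw [this]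
      exact (isClosed_eq (continuous_inner_const n) continuous_const).inter
        (isClosed_iInter fun l => isClosed_le (continuous_inner_const (A' l)) continuous_const)
    have hPG : Pj ⊆ closure G := by
      intro x hx
      obtain ⟨hxh, hxc⟩ := hx
      have hmemθ : ∀ θ : ℝ, 0 ≤ θ → θ < 1 → x₀ + θ • (x - x₀) ∈ G := by
        intro θ hθ0 hθ1
        have hfh : ⟪n, x₀ + θ • (x - x₀)⟫ = q := by
          rw [inner_add_right, real_inner_smul_right, inner_sub_right, hx₀.1, hxh]
          ring
        refine ⟨hfh, fun l => ?_⟩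
        have hfal : ⟪a l, x₀ + θ • (x - x₀)⟫
            = (1 - θ) * ⟪a l, x₀⟫ + θ * ⟪a l, x⟫ := by
          rw [inner_add_right, real_inner_smul_right, inner_sub_right]
          ring
        by_cases h0 : a' l = 0
        · -- constraint constant on the hyperplane
          have e1 := ha'n l h0 x₀ hx₀.1
          have e2 := ha'n l h0 _ hfh
          rcases hx₀.2 l with h | h
          · left; rw [e2, ← e1]; exact h
          · right; rw [e2, ← e1]; exact h
        · have hxPl := hxc l
          simp only [hA', hB', if_neg h0] at hxPl
          have hxbl : ⟪a l, x⟫ ≤ b l := by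
            have := hid l x hxh
            simp only [hb'] at hxPl
            linarith
          by_cases hcm : ⟪a l, m⟫ ≤ 0
          · -- closed-type constraint
            have hx₀bl : ⟪a l, x₀⟫ ≤ b l := by
              rcases hx₀.2 l with h | h
              · exact le_of_lt h
              · exact le_of_eq h.1
            have : ⟪a l, x₀ + θ • (x - x₀)⟫ ≤ b l := by
              rw [hfal]; nlinarith
            rcases lt_or_eq_of_le this with h | h
            · exact Or.inl h
            · exact Or.inr ⟨h, hcm⟩
          · -- strict-type constraint
            have hx₀bl : ⟪a l, x₀⟫ < b l := by
              rcases hx₀.2 l with h | h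
              · exact h
              · exact absurd h.2 hcm
            left
            rw [hfal]
            nlinarith
      have htd : Tendsto (fun θ : ℝ => x₀ + θ • (x - x₀)) (𝓝[<] (1:ℝ))
          (𝓝 (x₀ + (1:ℝ) • (x - x₀))) := by
        exact ((continuous_const.add (continuous_id.smul continuous_const)).tendsto
          (1:ℝ)).mono_left nhdsWithin_le_nhds
      have hx1 : x₀ + (1:ℝ) • (x - x₀) = x := by
        rw [one_smul]; abel
      rw [hx1] at htd
      have hev : ∀ᶠ θ in 𝓝[<] (1:ℝ), x₀ + θ • (x - x₀) ∈ G := by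
        have hIoo : Set.Ioo (0:ℝ) 1 ∈ 𝓝[<] (1:ℝ) :=
          Ioo_mem_nhdsLT_of_mem ⟨zero_lt_one, le_refl 1⟩
        filter_upwards [hIoo] with θ hθ
        exact hmemθ θ (le_of_lt hθ.1) hθ.2
      exact mem_closure_of_tendsto htd hev
    have hPeq : Pj = closure G := le_antisymm hPG (closure_minimal hGP hPcl)
    have hdiff : ∀ x, x ∈ Pj → x ∉ G →
        ∃ l, a' l ≠ 0 ∧ ⟪a' l, x⟫ = b' l := by
      intro x hxP hxG
      obtain ⟨hxh, hxc⟩ := hxP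
      have : ¬ ∀ l, ⟪a l, x⟫ < b l ∨ (⟪a l, x⟫ = b l ∧ ⟪a l, m⟫ ≤ 0) := by
        intro hcontra; exact hxG ⟨hxh, hcontra⟩
      push_neg at this
      obtain ⟨l, hl1, hl2⟩ := this
      by_cases h0 : a' l = 0
      · exfalso
        have e1 := ha'n l h0 x₀ hx₀.1
        have e2 := ha'n l h0 x hxh
        rcases hx₀.2 l with h | h
        · rw [e1] at h; rw [e2] at hl1; linarith
        · have := hl2 (e2.trans (e1.symm.trans h.1))
          linarith [h.2]
      · have hxPl := hxc l
        simp only [hA', hB', if_neg h0] at hxPl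
        have hxble : ⟪a l, x⟫ ≤ b l := by
          have := hid l x hxh
          simp only [hb'] at hxPl
          linarith
        have hxbe : ⟪a l, x⟫ = b l := le_antisymm hxble hl1
        refine ⟨l, h0, ?_⟩
        have := hid l x hxh
        simp only [hb']
        linarith
    refine ⟨Pj, ?_, ?_, hPeq, ?_⟩
    · -- convex polyhedron structure
      refine ⟨k + 2, Fin.cons n (Fin.cons (-n) A'), Fin.cons q (Fin.cons (-q) B'), ?_, ?_⟩
      · intro i
        refine Fin.cases ?_ (fun i' => ?_) i
        · exact hn0
        · refine Fin.cases ?_ (fun l => ?_) i'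
          · simpa using hn0
          · simp only [Fin.cons_succ, hA']
            split_ifs with h0
            · exact hn0
            · exact h0
      · ext x
        simp only [hPj, Set.mem_setOf_eq, Fin.forall_fin_succ, Fin.cons_zero, Fin.cons_succ]
        constructor
        · rintro ⟨hxh, hxc⟩
          refine ⟨le_of_eq hxh, ?_, fun l => hxc l⟩
          rw [inner_neg_left, hxh]
        · rintro ⟨h1, h2, h3⟩
          rw [inner_neg_left] at h2
          exact ⟨le_antisymm h1 (by linarith), h3⟩
    · intro x hx
      exact hx.1
    · -- a.e. equivalence
      have hnull : (μH[(d:ℝ)-1] : Measure (Euc d)).restrict {x : Euc d | ⟪n, x⟫ = q}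
          (⋃ l ∈ (Finset.univ.filter fun l : Fin k => a' l ≠ 0),
            {x : Euc d | ⟪a' l, x⟫ = b' l}) = 0 := by
        rw [← Finset.set_biUnion_coe, measure_biUnion_null_iff (Finset.countable_toSet _)]
        intro l hl
        rw [Finset.mem_coe, Finset.mem_filter] at hl
        rw [Measure.restrict_apply (slice_measurable (a' l) (b' l))]
        apply slice_null hn _ (b' l) q
        intro co hco
        apply hl.2
        have : ⟪n, a' l⟫ = co := by rw [hco, real_inner_smul_right, hnn]; ring
        rw [hna' l] at this
        rw [hco, ← this, zero_smul]
      rw [ae_iff]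
      refine measure_mono_null ?_ hnull
      intro x hx
      simp only [Set.mem_setOf_eq] at hx
      have hxP : x ∈ Pj ∧ x ∉ G := by
        by_cases hP : x ∈ Pj
        · exact ⟨hP, fun hG' => hx (iff_of_true hP hG')⟩
        · exact absurd (iff_of_false hP (fun hG' => hP (hGP hG'))) (fun h => hx h)
      obtain ⟨l, hl0, hle⟩ := hdiff x hxP.1 hxP.2
      exact Set.mem_biUnion (Finset.mem_filter.2 ⟨Finset.mem_univ l, hl0⟩) hle

end CaseA

lemma mem_of_transinv {E : Set (Euc d)} {u : Euc d}
    (hinv : ∀ t : ℝ, (fun x => x + t • u) '' E = E) (y : Euc d) (t : ℝ) :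
    y + t • u ∈ E ↔ y ∈ E := by
  constructor
  · intro h
    rw [← hinv (-t)]
    refine ⟨y + t • u, h, ?_⟩
    module
  · intro h
    rw [← hinv t]
    exact ⟨y, h, rfl⟩

section MainCases

variable {n : Euc d}

lemma caseA (hn : ‖n‖ = 1) {E : Set (Euc d)} {K : ℕ} {Q : Fin K → Set (Euc d)}
    (hQ : ∀ j, IsConvexPolyhedron (Q j)) (hEQ : E = ⋃ j, Q j)
    {u : Euc d} (hu : u ≠ 0) (hnu : ⟪n, u⟫ = 0)
    (hinv : ∀ t : ℝ, (fun x => x + t • u) '' E = E) (m : Euc d) (q : ℝ) :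
    ∃ D : Set (Euc d), IsLineConeIn {x : Euc d | ⟪n, x⟫ = q} n D ∧
      ∀ᵐ x ∂((μH[(d:ℝ)-1] : Measure (Euc d)).restrict {x : Euc d | ⟪n, x⟫ = q}),
        secv E x m = ind D x := by
  classical
  have hQconv : ∀ j, Convex ℝ (Q j) := fun j => convexPolyhedron_convex (hQ j)
  choose kk a b ha hrep using hQ
  set G : Fin K → Set (Euc d) := fun j => {x : Euc d | ⟪n, x⟫ = q ∧
    ∀ l, ⟪a j l, x⟫ < b j l ∨ (⟪a j l, x⟫ = b j l ∧ ⟪a j l, m⟫ ≤ 0)} with hGdef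
  have hGev : ∀ j x, x ∈ G j ↔ (⟪n, x⟫ = q ∧ evIn (Q j) x m) := by
    intro j x
    simp only [hGdef, Set.mem_setOf_eq]
    refine and_congr_right fun _ => ?_
    rw [← evIn_halfspaces (a j) (b j) x m]
    unfold evIn
    rw [hrep j]
    rfl
  have hpieces := fun j => caseA_piece hn (a j) (b j) m q
  choose Pj hPoly hPsub hPcl hPae using hpieces
  set T : Set (Euc d) := {x : Euc d | ⟪n, x⟫ = q ∧ evIn E x m} with hT
  have hTG : T = ⋃ j, G j := by
    ext x
    simp only [hT, Set.mem_setOf_eq, Set.mem_iUnion]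
    constructor
    · rintro ⟨hh, hev⟩
      rw [hEQ] at hev
      obtain ⟨j, hj⟩ := (evIn_iUnion hQconv x m).1 hev
      exact ⟨j, (hGev j x).2 ⟨hh, hj⟩⟩
    · rintro ⟨j, hj⟩
      obtain ⟨hh, hev⟩ := (hGev j x).1 hj
      refine ⟨hh, hev.mono fun ε hε => ?_⟩
      rw [hEQ]
      exact Set.mem_iUnion.2 ⟨j, hε⟩
  set D : Set (Euc d) := ⋃ j, Pj j with hD
  have hGPsub : ∀ j, G j ⊆ Pj j := by
    intro j
    rw [hPcl j]
    exact subset_closure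
  have hDT : D = closure T := by
    rw [hTG, hD]
    apply le_antisymm
    · intro x hx
      obtain ⟨j, hj⟩ := Set.mem_iUnion.1 hx
      rw [hPcl j] at hj
      exact closure_mono (Set.subset_iUnion G j) hj
    · refine closure_minimal (Set.iUnion_mono fun j => hGPsub j) ?_
      refine isClosed_iUnion_of_finite fun j => ?_
      rw [hPcl j]
      exact isClosed_closure
  have hTtrans : ∀ (y : Euc d) (t : ℝ), y + t • u ∈ T ↔ y ∈ T := by
    intro y t
    simp only [hT, Set.mem_setOf_eq]
    have h1 : ⟪n, y + t • u⟫ = ⟪n, y⟫ := by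
      rw [inner_add_right, real_inner_smul_right, hnu]; ring
    rw [h1]
    refine and_congr_right fun _ => ?_
    unfold evIn
    refine eventually_congr (Eventually.of_forall fun ε => ?_)
    have h2 : y + t • u + ε • m = (y + ε • m) + t • u := by module
    rw [h2]
    exact mem_of_transinv hinv (y + ε • m) t
  have hTinv : ∀ t : ℝ, (fun x => x + t • u) '' T = T := by
    intro t
    ext y
    constructor
    · rintro ⟨z, hz, rfl⟩
      exact (hTtrans z t).2 hz
    · intro hy
      refine ⟨y + (-t) • u, (hTtrans y (-t)).2 hy, ?_⟩
      module
  have hDinv : ∀ t : ℝ, (fun x => x + t • u) '' D = D := by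
    intro t
    rw [hDT]
    have h1 : (fun x : Euc d => x + t • u) = ⇑(Homeomorph.addRight (t • u)) := rfl
    rw [h1, (Homeomorph.addRight (t • u)).image_closure, ← h1, hTinv t]
  refine ⟨D, ⟨⟨K, Pj, fun j => ⟨hPoly j, hPsub j⟩, hD⟩, u, hu, hnu, hDinv⟩, ?_⟩
  filter_upwards [ae_restrict_mem (hset_measurable n q),
    ae_all_iff.2 fun j => hPae j] with x hxh hxiff
  rw [secv, ind_apply]
  by_cases hex : evIn E x m
  · have hxT : x ∈ T := ⟨hxh, hex⟩
    rw [hTG] at hxT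
    obtain ⟨j, hj⟩ := Set.mem_iUnion.1 hxT
    rw [if_pos hex, if_pos (Set.mem_iUnion.2 ⟨j, hGPsub j hj⟩)]
  · rw [if_neg hex, if_neg]
    intro hxD
    obtain ⟨j, hj⟩ := Set.mem_iUnion.1 hxD
    have hxG : x ∈ G j := (hxiff j).1 hj
    obtain ⟨-, hev⟩ := (hGev j x).1 hxG
    apply hex
    refine hev.mono fun ε hε => ?_
    rw [hEQ]
    exact Set.mem_iUnion.2 ⟨j, hε⟩

end MainCases

lemma caseB {n : Euc d} (hn : ‖n‖ = 1) {E : Set (Euc d)} {K : ℕ} {Q : Fin K → Set (Euc d)}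
    (hQ : ∀ j, IsConvexPolyhedron (Q j)) (hEQ : E = ⋃ j, Q j)
    {u : Euc d} (hnu : ⟪n, u⟫ ≠ 0)
    (hinv : ∀ t : ℝ, (fun x => x + t • u) '' E = E) (q : ℝ) :
    ∀ᵐ x ∂((μH[(d:ℝ)-1] : Measure (Euc d)).restrict {x : Euc d | ⟪n, x⟫ = q}),
      secv E x n = secv E x (-n) := by
  classical
  have hQconv : ∀ j, Convex ℝ (Q j) := fun j => convexPolyhedron_convex (hQ j)
  have hEgen : IsGenPolyhedron E := ⟨K, Q, hQ, hEQ⟩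
  have hnn : ⟪n, n⟫ = (1:ℝ) := by
    rw [real_inner_self_eq_norm_mul_norm, hn]; norm_num
  choose kk a b ha hrep using hQ
  set w : Euc d := n - (⟪n, u⟫)⁻¹ • u with hw
  have hnw : ⟪n, w⟫ = 0 := by
    rw [hw, inner_sub_right, real_inner_smul_right, hnn, inv_mul_cancel₀ hnu]
    ring
  have hEshift : ∀ (y : Euc d) (ε : ℝ), y + ε • n ∈ E ↔ y + ε • w ∈ E := by
    intro y ε
    have h1 : y + ε • w = (y + ε • n) + (-(ε * (⟪n, u⟫)⁻¹)) • u := by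
      rw [hw]; module
    rw [h1]
    exact (mem_of_transinv hinv _ _).symm
  have hevw : ∀ x : Euc d, (evIn E x n ↔ evIn E x w) ∧ (evIn E x (-n) ↔ evIn E x (-w)) := by
    intro x
    constructor
    · exact eventually_congr (Eventually.of_forall fun ε => hEshift x ε)
    · unfold evIn
      refine eventually_congr (Eventually.of_forall fun ε => ?_)
      have h1 : x + ε • (-n) = x + (-ε) • n := by module
      have h2 : x + ε • (-w) = x + (-ε) • w := by module
      rw [h1, h2]
      exact hEshift x (-ε)
  by_cases hw0 : w = 0
  · refine Eventually.of_forall fun x => ?_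
    have h1 : evIn E x w ↔ x ∈ E := by
      unfold evIn
      rw [hw0]
      simp only [smul_zero, add_zero]
      exact eventually_const
    have h2 : evIn E x (-w) ↔ x ∈ E := by
      unfold evIn
      rw [hw0]
      simp only [neg_zero, smul_zero, add_zero]
      exact eventually_const
    rw [secv, secv, if_congr ((hevw x).1.trans h1) rfl rfl,
      if_congr ((hevw x).2.trans h2) rfl rfl]
  · have oneSide : ∀ (x : Euc d) (w'' : Euc d), evIn E x w'' →
        (∀ᶠ ε in 𝓝[>] (0:ℝ), x + ε • (-w'') ∉ E) →
        ∃ j l, ⟪a j l, w''⟫ ≠ 0 ∧ ⟪a j l, x⟫ = b j l := by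
      intro x w'' hin hout
      rw [hEQ] at hin
      obtain ⟨j, hj⟩ := (evIn_iUnion hQconv x w'').1 hin
      have houtQ : ∀ᶠ ε in 𝓝[>] (0:ℝ), x + ε • (-w'') ∉ Q j := by
        refine hout.mono fun ε hε hmem => hε ?_
        rw [hEQ]
        exact Set.mem_iUnion.2 ⟨j, hmem⟩
      have hcond : ∀ l, ⟪a j l, x⟫ < b j l ∨ (⟪a j l, x⟫ = b j l ∧ ⟪a j l, w''⟫ ≤ 0) := by
        rw [← evIn_halfspaces (a j) (b j) x w'']
        unfold evIn at hj
        rw [hrep j] at hj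
        exact hj
      have hviol : ∃ l, ∃ᶠ ε in 𝓝[>] (0:ℝ), b j l < ⟪a j l, x⟫ + ε * ⟪a j l, -w''⟫ := by
        by_contra hcon
        push_neg at hcon
        have hall : ∀ᶠ ε in 𝓝[>] (0:ℝ), ∀ l, ⟪a j l, x + ε • (-w'')⟫ ≤ b j l := by
          rw [eventually_all]
          intro l
          have := hcon l
          refine this.mono fun ε hε => ?_
          rw [inner_line]
          exact hε
        have hallQ : ∀ᶠ ε in 𝓝[>] (0:ℝ), x + ε • (-w'') ∈ Q j := by
          refine hall.mono fun ε hε => ?_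
          rw [hrep j]
          exact hε
        obtain ⟨ε, h1, h2⟩ := (hallQ.and houtQ).exists
        exact h2 h1
      obtain ⟨l, hl⟩ := hviol
      have hfreq : ∃ᶠ ε in 𝓝[>] (0:ℝ), b j l < ⟪a j l, x⟫ - ε * ⟪a j l, w''⟫ := by
        refine hl.mono fun ε hε => ?_
        rw [inner_neg_right] at hε
        linarith
      rcases hcond l with hlt | ⟨heq, hs0⟩
      · exfalso
        have hev2 : ∀ᶠ ε in 𝓝[>] (0:ℝ), ⟪a j l, x⟫ - ε * ⟪a j l, w''⟫ < b j l :=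
          (tendsto_affine_sub (⟪a j l, x⟫) (⟪a j l, w''⟫)).eventually_lt_const hlt
        obtain ⟨ε, h1, h2⟩ := (hfreq.and_eventually hev2).exists
        linarith
      · have hev3 : ∃ᶠ ε in 𝓝[>] (0:ℝ), (0 < ε ∧ b j l < ⟪a j l, x⟫ - ε * ⟪a j l, w''⟫) := by
          refine (hfreq.and_eventually self_mem_nhdsWithin).mono fun ε hε => ?_
          exact ⟨hε.2, hε.1⟩
        obtain ⟨ε, hε0, hεlt⟩ := hev3.exists
        rw [heq] at hεlt
        have hsneg : ⟪a j l, w''⟫ < 0 := by nlinarith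
        exact ⟨j, l, ne_of_lt hsneg, heq⟩
    -- the bad set is contained in finitely many thin slices
    have hnull : (μH[(d:ℝ)-1] : Measure (Euc d)).restrict {x : Euc d | ⟪n, x⟫ = q}
        (⋃ j, ⋃ l ∈ (Finset.univ.filter fun l : Fin (kk j) => ⟪a j l, w⟫ ≠ 0),
          {x : Euc d | ⟪a j l, x⟫ = b j l}) = 0 := by
      rw [measure_iUnion_null_iff]
      intro j
      rw [← Finset.set_biUnion_coe, measure_biUnion_null_iff (Finset.countable_toSet _)]
      intro l hl
      rw [Finset.mem_coe, Finset.mem_filter] at hl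
      rw [Measure.restrict_apply (slice_measurable _ _)]
      apply slice_null hn _ (b j l) q
      intro co hco
      apply hl.2
      rw [hco, real_inner_smul_left, hnw, mul_zero]
    rw [ae_iff]
    refine measure_mono_null ?_ hnull
    intro x hx
    simp only [Set.mem_setOf_eq] at hx
    have hxd : (evIn E x w ∧ ¬ evIn E x (-w)) ∨ (¬ evIn E x w ∧ evIn E x (-w)) := by
      by_cases h1 : evIn E x w <;> by_cases h2 : evIn E x (-w)
      · exfalso
        apply hx
        rw [secv, secv, if_pos ((hevw x).1.2 h1), if_pos ((hevw x).2.2 h2)]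
      · exact Or.inl ⟨h1, h2⟩
      · exact Or.inr ⟨h1, h2⟩
      · exfalso
        apply hx
        rw [secv, secv, if_neg (fun h => h1 ((hevw x).1.1 h)),
          if_neg (fun h => h2 ((hevw x).2.1 h))]
    have hkey : ∃ j l, ⟪a j l, w⟫ ≠ 0 ∧ ⟪a j l, x⟫ = b j l := by
      rcases hxd with ⟨h1, h2⟩ | ⟨h1, h2⟩
      · have hout : ∀ᶠ ε in 𝓝[>] (0:ℝ), x + ε • (-w) ∉ E := by
          rcases genPolyhedron_ev_dichotomy hEgen x (-w) with h | h
          · exact absurd h h2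
          · exact h
        exact oneSide x w h1 hout
      · have hout : ∀ᶠ ε in 𝓝[>] (0:ℝ), x + ε • w ∉ E := by
          rcases genPolyhedron_ev_dichotomy hEgen x w with h | h
          · exact absurd h h1
          · exact h
        have hout' : ∀ᶠ ε in 𝓝[>] (0:ℝ), x + ε • (-(-w)) ∉ E := by
          rw [neg_neg]
          exact hout
        obtain ⟨j, l, hne, heq⟩ := oneSide x (-w) h2 hout'
        refine ⟨j, l, ?_, heq⟩
        rw [inner_neg_right] at hne
        intro h0
        exact hne (by rw [h0, neg_zero])
    obtain ⟨j, l, hne, heq⟩ := hkey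
    refine Set.mem_iUnion.2 ⟨j, Set.mem_biUnion (Finset.mem_filter.2 ⟨Finset.mem_univ l, hne⟩) heq⟩

/-- `f` agrees a.e. on the hyperplane with a combination of line-cones in the hyperplane. -/
def LCh (n : Euc d) (q : ℝ) (f : Euc d → ℝ) : Prop :=
  ∃ (k : ℕ) (β : Fin k → ℝ) (D : Fin k → Set (Euc d)),
    (∀ i, IsLineConeIn {x : Euc d | ⟪n, x⟫ = q} n (D i)) ∧
    f =ᵐ[(μH[(d:ℝ)-1] : Measure (Euc d)).restrict {x : Euc d | ⟪n, x⟫ = q}]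
      fun x => ∑ i, β i * ind (D i) x

variable {n : Euc d} {q : ℝ}

lemma LCh_congr {f g : Euc d → ℝ}
    (hfg : f =ᵐ[(μH[(d:ℝ)-1] : Measure (Euc d)).restrict {x : Euc d | ⟪n, x⟫ = q}] g)
    (hg : LCh n q g) : LCh n q f := by
  obtain ⟨k, β, D, hD, hae⟩ := hg
  exact ⟨k, β, D, hD, hfg.trans hae⟩

lemma LCh_zero : LCh n q (fun _ => (0:ℝ)) := by
  refine ⟨0, Fin.elim0, Fin.elim0, fun i => i.elim0, ?_⟩
  refine Eventually.of_forall fun x => ?_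
  simp

lemma LCh_single {D : Set (Euc d)} (hD : IsLineConeIn {x : Euc d | ⟪n, x⟫ = q} n D) :
    LCh n q (ind D) := by
  refine ⟨1, fun _ => 1, fun _ => D, fun _ => hD, ?_⟩
  refine Eventually.of_forall fun x => ?_
  simp

lemma LCh_smul {f : Euc d → ℝ} (c : ℝ) (hf : LCh n q f) : LCh n q (fun x => c * f x) := by
  obtain ⟨k, β, D, hD, hae⟩ := hf
  refine ⟨k, fun i => c * β i, D, hD, ?_⟩
  refine hae.mono fun x hx => ?_
  simp only at hx ⊢
  rw [hx, Finset.mul_sum]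
  exact Finset.sum_congr rfl fun i _ => by ring

lemma LCh_add {f g : Euc d → ℝ} (hf : LCh n q f) (hg : LCh n q g) :
    LCh n q (fun x => f x + g x) := by
  obtain ⟨k₁, β₁, D₁, hD₁, hae₁⟩ := hf
  obtain ⟨k₂, β₂, D₂, hD₂, hae₂⟩ := hg
  refine ⟨k₁ + k₂, Fin.append β₁ β₂, Fin.append D₁ D₂, ?_, ?_⟩
  · intro i
    refine Fin.addCases (fun i₁ => ?_) (fun i₂ => ?_) i
    · simpa [Fin.append_left] using hD₁ i₁
    · simpa [Fin.append_right] using hD₂ i₂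
  · filter_upwards [hae₁, hae₂] with x h1 h2
    rw [h1, h2, Fin.sum_univ_add]
    congr 1
    · exact Finset.sum_congr rfl fun i _ => by rw [Fin.append_left, Fin.append_left]
    · exact Finset.sum_congr rfl fun i _ => by rw [Fin.append_right, Fin.append_right]

lemma LCh_sum {k : ℕ} (F : Fin k → Euc d → ℝ) (h : ∀ i, LCh n q (F i)) :
    LCh n q (fun x => ∑ i, F i x) := by
  classical
  have : ∀ s : Finset (Fin k), LCh n q (fun x => ∑ i ∈ s, F i x) := by
    intro s
    induction s using Finset.cons_induction with
    | empty => simpa using (LCh_zero (n := n) (q := q))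
    | cons a s ha ih =>
      have := LCh_add (h a) ih
      refine LCh_congr (Eventually.of_forall fun x => ?_) this
      simp only
      rw [Finset.sum_cons]
  exact this Finset.univ

/-- If `v ∈ P` is not an algebraic vertex of the generalized polyhedron
`P`, then for every hyperplane `h` through `v` with unit normal `n` the signed section of
the indicator function of the tangent cone `tcone P v` by `h` agrees, at almost every
point of `h` (w.r.t. the `(d-1)`-dimensional Hausdorff measure restricted to `h`), with a
finite real linear combination of indicator functions of line-cones contained in `h`. -/
theorem statement_8 {d : ℕ} (P : Set (Euc d)) (hP : IsGenPolyhedron P)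
    (v : Euc d) (hvP : v ∈ P) (hv : ¬ IsAlgebraicVertex P v)
    (n : Euc d) (hn : ‖n‖ = 1) :
    ∃ (k : ℕ) (β : Fin k → ℝ) (D : Fin k → Set (Euc d)),
      (∀ i, IsLineConeIn {x : Euc d | ⟪n, x⟫ = ⟪n, v⟫} n (D i)) ∧
      ∀ᵐ x ∂((μH[(d : ℝ) - 1] : Measure (Euc d)).restrict
          {x : Euc d | ⟪n, x⟫ = ⟪n, v⟫}),
        ∃ Lp Lm : ℝ,
          Tendsto (fun ε : ℝ => ind (tcone P v) (x + ε • n)) (𝓝[>] 0) (𝓝 Lp) ∧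
          Tendsto (fun ε : ℝ => ind (tcone P v) (x - ε • n)) (𝓝[>] 0) (𝓝 Lm) ∧
          Lp - Lm = ∑ i, β i * ind (D i) x := by
  classical
  set q : ℝ := ⟪n, v⟫ with hq
  have hn0 : n ≠ 0 := by intro h; rw [h, norm_zero] at hn; norm_num at hn
  have hnn : ⟪n, n⟫ = (1:ℝ) := by
    rw [real_inner_self_eq_norm_mul_norm, hn]; norm_num
  have hLC : IsLinCombOfLineCones (ind (tcone P v)) := by
    by_contra hnc
    exact hv ⟨hvP, hnc⟩
  obtain ⟨k₀, α, E, hE, hfg⟩ := hLC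
  set C : Set (Euc d) := tcone P v with hC
  have hCgen : IsGenPolyhedron C := isGenPolyhedron_tcone hP v
  have hEgen : ∀ i, IsGenPolyhedron (E i) := fun i => (hE i).1
  obtain ⟨A₀, hA₀ne, hA₀⟩ := signDet_genPolyhedron hCgen
  choose Ai hAine hAi using fun i => signDet_genPolyhedron (hEgen i)
  set A : Finset (Euc d × ℝ) := A₀ ∪ Finset.univ.biUnion Ai with hA
  have hAne : ∀ p ∈ A, p.1 ≠ 0 := by
    intro p hp
    rw [hA, Finset.mem_union] at hp
    rcases hp with hp | hp
    · exact hA₀ne p hp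
    · rw [Finset.mem_biUnion] at hp
      obtain ⟨i, -, hp⟩ := hp
      exact hAine i p hp
  have hSDf : SignDet A (ind C) := hA₀.mono Finset.subset_union_left
  have hSDg : SignDet A (fun x => ∑ i, α i * ind (E i) x) := by
    refine signDet_combo α fun i => (hAi i).mono ?_
    refine Finset.Subset.trans ?_ Finset.subset_union_right
    intro p hp
    rw [Finset.mem_biUnion]
    exact ⟨i, Finset.mem_univ i, hp⟩
  -- frequently off the hyperplane arrangement, in both normal directions
  have hgood : ∀ m : Euc d, m = n ∨ m = -n → ∀ p ∈ A, ⟪p.1, m⟫ = 0 →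
      (μH[(d:ℝ)-1] : Measure (Euc d)) ({x | ⟪p.1, x⟫ = p.2} ∩ {x | ⟪n, x⟫ = q}) = 0 := by
    intro m hm p hp hpm
    apply slice_null hn _ p.2 q
    intro co hco
    apply hAne p hp
    rcases hm with hm | hm
    · rw [hm] at hpm
      rw [hco] at hpm ⊢
      rw [real_inner_smul_left, hnn, mul_one] at hpm
      rw [hpm, zero_smul]
    · rw [hm, inner_neg_right, neg_eq_zero] at hpm
      rw [hco] at hpm ⊢
      rw [real_inner_smul_left, hnn, mul_one] at hpm
      rw [hpm, zero_smul]
  have hfreqp := freq_off_H (A := A) (n := n) (q := q) n (hgood n (Or.inl rfl))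
  have hfreqm := freq_off_H (A := A) (n := n) (q := q) (-n) (hgood (-n) (Or.inr rfl))
  -- key identity: the signed section of C equals the combination of signed sections
  have hkeydir : ∀ (x : Euc d) (m : Euc d),
      (∃ᶠ ε in 𝓝[>] (0:ℝ), ∀ p ∈ A, ⟪p.1, x + ε • m⟫ ≠ p.2) →
      secv C x m = ∑ i, α i * secv (E i) x m := by
    intro x m hfr
    have hevC := ev_ind_eq_secv hCgen x m
    have hevE : ∀ᶠ ε in 𝓝[>] (0:ℝ), ∀ i, ind (E i) (x + ε • m) = secv (E i) x m :=
      eventually_all.2 fun i => ev_ind_eq_secv (hEgen i) x m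
    obtain ⟨ε, hne, hCx, hEx⟩ := (hfr.and_eventually (hevC.and hevE)).exists
    have heq := eq_of_signDet_ae_eq hSDf hSDg hfg hne
    rw [hCx] at heq
    rw [heq]
    exact Finset.sum_congr rfl fun i _ => by rw [hEx i]
  have hkey : ∀ᵐ x ∂((μH[(d:ℝ)-1] : Measure (Euc d)).restrict {x : Euc d | ⟪n, x⟫ = q}),
      (secv C x n - secv C x (-n))
        = ∑ i, α i * (secv (E i) x n - secv (E i) x (-n)) := by
    filter_upwards [hfreqp, hfreqm] with x hfp hfm
    rw [hkeydir x n hfp, hkeydir x (-n) hfm, ← Finset.sum_sub_distrib]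
    exact Finset.sum_congr rfl fun i _ => by ring
  -- each line cone contributes a line-cone-in-h combination
  have perI : ∀ i, LCh n q (fun x => secv (E i) x n - secv (E i) x (-n)) := by
    intro i
    obtain ⟨⟨K, Q, hQ, hEQ⟩, u, hu, huinv⟩ := hE i
    by_cases hnu : ⟪n, u⟫ = 0
    · obtain ⟨D₁, hD₁, hae₁⟩ := caseA hn hQ hEQ hu hnu huinv n q
      obtain ⟨D₂, hD₂, hae₂⟩ := caseA hn hQ hEQ hu hnu huinv (-n) q
      refine ⟨2, ![1, -1], ![D₁, D₂], ?_, ?_⟩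
      · intro j
        fin_cases j
        · exact hD₁
        · exact hD₂
      · filter_upwards [hae₁, hae₂] with x h1 h2
        rw [h1, h2, Fin.sum_univ_two]
        simp only [Matrix.cons_val_zero, Matrix.cons_val_one, Matrix.head_cons]
        ring
    · have hae := caseB hn hQ hEQ hnu huinv q
      refine LCh_congr ?_ (LCh_zero (n := n) (q := q))
      filter_upwards [hae] with x hx
      rw [hx]
      ring
  have hsum : LCh n q (fun x => ∑ i, α i * (secv (E i) x n - secv (E i) x (-n))) :=
    LCh_sum _ fun i => LCh_smul (α i) (perI i)
  have hFin : LCh n q (fun x => secv C x n - secv C x (-n)) := LCh_congr hkey hsum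
  obtain ⟨k, β, D, hD, hae⟩ := hFin
  refine ⟨k, β, D, hD, ?_⟩
  filter_upwards [hae] with x hx
  refine ⟨secv C x n, secv C x (-n), tendsto_ind_secv hCgen x n, ?_, hx⟩
  have := tendsto_ind_secv hCgen x (-n)
  refine this.congr fun ε => ?_
  congr 1
  rw [sub_eq_add_neg, smul_neg]
end
end

section
/- Let P ⊆ ℝ^d be a generalized polyhedron, let n be a unit vector, and let h = {x ∈ ℝ^d : ⟨n,x⟩ = c} be a hyperplane with normal n. Then for almost every x ∈ h (with respect to (d−1)-dimensional Hausdorff measure on h) both one-sided limits lim_{ε→0⁺}[P](x+εn) and lim_{ε→0⁺}[P](x−εn) exist; moreover, the signed section f_h(x) = lim_{ε→0⁺}[P](x+εn) − lim_{ε→0⁺}[P](x−εn) agrees, for almost every x ∈ h, with a finite real linear combination of indicator functions of convex polyhedra contained in h. -/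
open MeasureTheory Filter Topology RealInnerProductSpace

noncomputable section

open Set Module
open scoped ENNReal NNReal

lemma null_inter {d : ℕ} (n a : Euc d) (hn : ‖n‖ = 1)
    (hna : ¬ ∃ t : ℝ, a = t • n) (b c : ℝ) :
    μH[(d : ℝ) - 1] {x : Euc d | ⟪n, x⟫ = c ∧ ⟪a, x⟫ = b} = 0 := by
  classical
  have hn0 : n ≠ 0 := by intro h; rw [h, norm_zero] at hn; norm_num at hn
  have hli : LinearIndependent ℝ ![n, a] := by
    rw [LinearIndependent.pair_iff]
    intro s t hst
    rcases eq_or_ne t 0 with rfl | ht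
    · simp only [zero_smul, add_zero, smul_eq_zero] at hst
      rcases hst with h | h
      · exact ⟨h, rfl⟩
      · exact absurd h hn0
    · exfalso; apply hna
      have h1 : t • a = -(s • n) := by
        rw [eq_neg_iff_add_eq_zero, add_comm]; exact hst
      refine ⟨-s / t, ?_⟩
      calc a = (t⁻¹ * t) • a := by rw [inv_mul_cancel₀ ht, one_smul]
      _ = t⁻¹ • (t • a) := by rw [mul_smul]
      _ = t⁻¹ • (-(s • n)) := by rw [h1]
      _ = (-s / t) • n := by
          rw [smul_neg, smul_smul, ← neg_smul]
          congr 1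
          field_simp
  set K : Submodule ℝ (Euc d) := Submodule.span ℝ (Set.range ![n, a]) with hK
  have hfK : finrank ℝ K = 2 := by
    rw [hK, finrank_span_eq_card hli, Fintype.card_fin]
  have hd2 : 2 ≤ d := by
    have := K.finrank_le
    rw [hfK] at this
    simpa [finrank_euclideanSpace] using this
  have hfW : finrank ℝ Kᗮ = d - 2 := by
    have := K.finrank_add_finrank_orthogonal
    rw [hfK, finrank_euclideanSpace, Fintype.card_fin] at this
    omega
  set S := {x : Euc d | ⟪n, x⟫ = c ∧ ⟪a, x⟫ = b} with hS
  rcases S.eq_empty_or_nonempty with h | ⟨x₀, hx₀⟩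
  · rw [h]; exact measure_empty
  have hsub : S ⊆ (fun y : Euc d => x₀ + y) '' (Kᗮ : Set (Euc d)) := by
    intro x hx
    refine ⟨x - x₀, ?_, by module⟩
    rw [SetLike.mem_coe, Submodule.mem_orthogonal]
    intro u hu
    rw [hK] at hu
    have hrange : Set.range ![n, a] = {n, a} := by
      ext y; simp [Fin.exists_fin_two, eq_comm]; tauto
    rw [hrange, Submodule.mem_span_pair] at hu
    obtain ⟨s, t, rfl⟩ := hu
    have h1 : ⟪n, x - x₀⟫ = 0 := by
      rw [inner_sub_right, hx.1, hx₀.1, sub_self]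
    have h2 : ⟪a, x - x₀⟫ = 0 := by
      rw [inner_sub_right, hx.2, hx₀.2, sub_self]
    rw [inner_add_left, real_inner_smul_left, real_inner_smul_left, h1, h2]
    ring
  have hiso1 : Isometry (fun y : Euc d => x₀ + y) :=
    Isometry.of_dist_eq fun x y => dist_add_left x₀ x y
  have hiso2 : Isometry ((↑) : Kᗮ → Euc d) := fun x y => rfl
  have hdim : dimH S ≤ ((d - 2 : ℕ) : ℝ≥0∞) := by
    calc dimH S ≤ dimH ((fun y : Euc d => x₀ + y) '' (Kᗮ : Set (Euc d))) := dimH_mono hsub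
    _ = dimH (Kᗮ : Set (Euc d)) := hiso1.dimH_image _
    _ = dimH (Set.univ : Set Kᗮ) := by
        rw [← hiso2.dimH_image]
        congr 1
        simp [Set.image_univ, Subtype.range_coe]
    _ = ((d - 2 : ℕ) : ℝ≥0∞) := by
        rw [Real.dimH_univ_eq_finrank, hfW]
  have key : μH[((d - 1 : ℕ) : ℝ≥0)] S = 0 := by
    apply hausdorffMeasure_of_dimH_lt
    refine lt_of_le_of_lt hdim ?_
    rw [show (((d - 1 : ℕ) : ℝ≥0) : ℝ≥0∞) = ((d - 1 : ℕ) : ℝ≥0∞) by simp]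
    exact_mod_cast Nat.sub_lt_sub_left (by omega) (by omega)
  have hexp : ((d : ℝ) - 1) = (((d - 1 : ℕ) : ℝ≥0) : ℝ) := by
    rw [NNReal.coe_natCast, Nat.cast_sub (by omega : 1 ≤ d), Nat.cast_one]
  rw [hexp]
  exact key


lemma cp_inter {d : ℕ} {S T : Set (Euc d)} (hS : IsConvexPolyhedron S)
    (hT : IsConvexPolyhedron T) : IsConvexPolyhedron (S ∩ T) := by
  obtain ⟨m, a, b, ha, rfl⟩ := hS
  obtain ⟨m', a', b', ha', rfl⟩ := hT
  refine ⟨m + m', Fin.append a a', Fin.append b b', ?_, ?_⟩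
  · intro i
    refine i.addCases (fun j => ?_) (fun j => ?_)
    · rw [Fin.append_left]; exact ha j
    · rw [Fin.append_right]; exact ha' j
  · ext x
    simp only [Set.mem_inter_iff, Set.mem_setOf_eq]
    constructor
    · rintro ⟨h1, h2⟩ i
      refine i.addCases (fun j => ?_) (fun j => ?_)
      · rw [Fin.append_left, Fin.append_left]; exact h1 j
      · rw [Fin.append_right, Fin.append_right]; exact h2 j
    · intro h
      refine ⟨fun j => ?_, fun j => ?_⟩
      · have := h (Fin.castAdd m' j); rwa [Fin.append_left, Fin.append_left] at this
      · have := h (Fin.natAdd m j); rwa [Fin.append_right, Fin.append_right] at this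

lemma cp_hyperplane {d : ℕ} {n : Euc d} (hn : n ≠ 0) (c : ℝ) :
    IsConvexPolyhedron {x : Euc d | ⟪n, x⟫ = c} := by
  refine ⟨2, ![n, -n], ![c, -c], ?_, ?_⟩
  · intro i
    fin_cases i <;> simp [hn]
  · ext x
    simp only [Set.mem_setOf_eq, Fin.forall_fin_two]
    rw [show (![n, -n] 0) = n from rfl, show (![n, -n] 1) = -n from rfl,
      show (![c, -c] 0) = c from rfl, show (![c, -c] 1) = -c from rfl, inner_neg_left]
    constructor
    · intro h; exact ⟨h.le, by rw [h]⟩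
    · rintro ⟨h1, h2⟩; linarith

lemma cp_empty {d : ℕ} {n : Euc d} (hn : n ≠ 0) :
    IsConvexPolyhedron (∅ : Set (Euc d)) := by
  refine ⟨2, ![n, -n], ![0, -1], ?_, ?_⟩
  · intro i; fin_cases i <;> simp [hn]
  · ext x
    simp only [Set.mem_empty_iff_false, Set.mem_setOf_eq, Fin.forall_fin_two, false_iff]
    rw [show (![n, -n] 0) = n from rfl, show (![n, -n] 1) = -n from rfl,
      show (![(0:ℝ), -1] 0) = 0 from rfl, show (![(0:ℝ), -1] 1) = -1 from rfl, inner_neg_left]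
    rintro ⟨h1, h2⟩; linarith

/-- `f` is exactly a finite linear combination of indicators of convex polyhedra inside `H`. -/
def IsComboOn {d : ℕ} (H : Set (Euc d)) (f : Euc d → ℝ) : Prop :=
  ∃ (k : ℕ) (β : Fin k → ℝ) (Q : Fin k → Set (Euc d)),
    (∀ i, IsConvexPolyhedron (Q i) ∧ Q i ⊆ H) ∧ ∀ x, f x = ∑ i, β i * ind (Q i) x

lemma combo_single {d : ℕ} {H Q : Set (Euc d)} (h1 : IsConvexPolyhedron Q) (h2 : Q ⊆ H) :
    IsComboOn H (ind Q) := by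
  exact ⟨1, fun _ => 1, fun _ => Q, fun i => ⟨h1, h2⟩, fun x => by simp⟩

lemma combo_add {d : ℕ} {H : Set (Euc d)} {f g : Euc d → ℝ} (hf : IsComboOn H f)
    (hg : IsComboOn H g) : IsComboOn H (fun x => f x + g x) := by
  obtain ⟨k1, β1, Q1, h1, e1⟩ := hf
  obtain ⟨k2, β2, Q2, h2, e2⟩ := hg
  refine ⟨k1 + k2, Fin.append β1 β2, Fin.append Q1 Q2, ?_, ?_⟩
  · intro i
    refine i.addCases (fun j => ?_) (fun j => ?_)
    · rw [Fin.append_left]; exact h1 j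
    · rw [Fin.append_right]; exact h2 j
  · intro x
    show f x + g x = _
    rw [e1 x, e2 x, Fin.sum_univ_add]
    congr 1
    · exact Finset.sum_congr rfl fun j _ => by rw [Fin.append_left, Fin.append_left]
    · exact Finset.sum_congr rfl fun j _ => by rw [Fin.append_right, Fin.append_right]

lemma combo_neg {d : ℕ} {H : Set (Euc d)} {f : Euc d → ℝ} (hf : IsComboOn H f) :
    IsComboOn H (fun x => -f x) := by
  obtain ⟨k, β, Q, h, e⟩ := hf
  exact ⟨k, fun i => -β i, Q, h, fun x => by
    show -f x = _
    rw [e x, ← Finset.sum_neg_distrib]; exact Finset.sum_congr rfl fun j _ => by ring⟩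

lemma combo_sub {d : ℕ} {H : Set (Euc d)} {f g : Euc d → ℝ} (hf : IsComboOn H f)
    (hg : IsComboOn H g) : IsComboOn H (fun x => f x - g x) := by
  have := combo_add hf (combo_neg hg)
  simpa [sub_eq_add_neg] using this

lemma ind_union {d : ℕ} (A B : Set (Euc d)) (x : Euc d) :
    ind (A ∪ B) x = ind A x + ind B x - ind (A ∩ B) x := by
  classical
  by_cases hA : x ∈ A <;> by_cases hB : x ∈ B <;>
    simp [ind, Set.indicator, hA, hB]

lemma combo_union {d : ℕ} {H : Set (Euc d)} : ∀ (m : ℕ) (S : Fin m → Set (Euc d)),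
    (∀ j, IsConvexPolyhedron (S j) ∧ S j ⊆ H) → IsComboOn H (ind (⋃ j, S j)) := by
  intro m
  induction m with
  | zero =>
    intro S _
    refine ⟨0, Fin.elim0, Fin.elim0, fun i => i.elim0, fun x => ?_⟩
    simp [ind, Set.iUnion_of_empty]
  | succ m ih =>
    intro S hS
    have hsplit : (⋃ j, S j) = (⋃ j : Fin m, S j.castSucc) ∪ S (Fin.last m) := by
      ext x
      simp only [Set.mem_iUnion, Set.mem_union]
      constructor
      · rintro ⟨i, hi⟩
        refine i.lastCases ?_ ?_ hi
        · intro h; exact Or.inr h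
        · intro j h; exact Or.inl ⟨j, h⟩
      · rintro (⟨j, hj⟩ | h)
        · exact ⟨j.castSucc, hj⟩
        · exact ⟨Fin.last m, h⟩
    rw [hsplit]
    have h1 : IsComboOn H (ind (⋃ j : Fin m, S j.castSucc)) :=
      ih _ (fun j => hS j.castSucc)
    have h2 : IsComboOn H (ind (S (Fin.last m))) :=
      combo_single (hS _).1 (hS _).2
    have h3 : IsComboOn H (ind ((⋃ j : Fin m, S j.castSucc) ∩ S (Fin.last m))) := by
      rw [Set.iUnion_inter]
      exact ih _ (fun j => ⟨cp_inter (hS j.castSucc).1 (hS _).1,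
        fun x hx => (hS j.castSucc).2 hx.1⟩)
    have := combo_sub (combo_add h1 h2) h3
    refine this.imp fun k h => ?_
    obtain ⟨β, Q, hQ, e⟩ := h
    exact ⟨β, Q, hQ, fun x => by rw [← e x, ind_union]⟩


/-- the limiting condition for a half-space along direction `v`. -/
def scond {d : ℕ} (v a : Euc d) (b : ℝ) (x : Euc d) : Prop :=
  ⟪a, x⟫ < b ∨ (⟪a, x⟫ = b ∧ ⟪a, v⟫ ≤ 0)

lemma ev_half {d : ℕ} (v a x : Euc d) (b : ℝ) :
    ∀ᶠ ε in 𝓝[>] (0 : ℝ), (⟪a, x + ε • v⟫ ≤ b ↔ scond v a b x) := by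
  have hexp : ∀ ε : ℝ, ⟪a, x + ε • v⟫ = ⟪a, x⟫ + ε * ⟪a, v⟫ := fun ε => by
    rw [inner_add_right, real_inner_smul_right]
  have htend : Tendsto (fun ε : ℝ => ⟪a, x⟫ + ε * ⟪a, v⟫) (𝓝[>] 0) (𝓝 ⟪a, x⟫) := by
    have : Tendsto (fun ε : ℝ => ⟪a, x⟫ + ε * ⟪a, v⟫) (𝓝 0) (𝓝 (⟪a, x⟫ + 0 * ⟪a, v⟫)) :=
      (tendsto_const_nhds.add ((continuous_id.mul continuous_const).tendsto 0))
    simpa using this.mono_left nhdsWithin_le_nhds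
  rcases lt_trichotomy (⟪a, x⟫ : ℝ) b with hlt | heq | hgt
  · have : ∀ᶠ ε in 𝓝[>] (0:ℝ), ⟪a, x⟫ + ε * ⟪a, v⟫ < b := htend.eventually_lt_const hlt
    refine this.mono fun ε hε => ?_
    rw [hexp]
    simp only [scond]
    exact iff_of_true hε.le (Or.inl hlt)
  · filter_upwards [self_mem_nhdsWithin] with ε (hε : (0:ℝ) < ε)
    rw [hexp, heq]
    simp only [scond, heq, lt_self_iff_false, true_and, false_or]
    constructor
    · intro h
      have h2 : ε * ⟪a, v⟫ ≤ 0 := by linarith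
      by_contra hpos
      push_neg at hpos
      nlinarith
    · intro h
      nlinarith
  · have : ∀ᶠ ε in 𝓝[>] (0:ℝ), b < ⟪a, x⟫ + ε * ⟪a, v⟫ := htend.eventually_const_lt hgt
    refine this.mono fun ε hε => ?_
    rw [hexp]
    simp only [scond]
    constructor
    · intro h; linarith
    · rintro (h | ⟨h, -⟩) <;> linarith

lemma ind_congr {d : ℕ} {S T : Set (Euc d)} {x y : Euc d} (h : x ∈ S ↔ y ∈ T) :
    ind S x = ind T y := by
  classical
  by_cases hx : x ∈ S
  · rw [ind, ind, Set.indicator_of_mem hx, Set.indicator_of_mem (h.1 hx)]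
  · rw [ind, ind, Set.indicator_of_notMem hx,
      Set.indicator_of_notMem (fun hy => hx (h.2 hy))]

/-- For a generalized polyhedron `P` and a hyperplane `h` with unit
normal `n`, both one-sided limits of the indicator function of `P` exist at almost every
point of `h`, and the signed section of the indicator function of `P` by `h` agrees
almost everywhere on `h` with a finite real linear combination of indicator functions of
convex polyhedra contained in `h`. -/
theorem statement_9 {d : ℕ} (P : Set (Euc d)) (hP : IsGenPolyhedron P)
    (n : Euc d) (hn : ‖n‖ = 1) (c : ℝ) :
    (∀ᵐ x ∂((μH[(d : ℝ) - 1] : Measure (Euc d)).restrict {x : Euc d | ⟪n, x⟫ = c}),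
        (∃ Lp, Tendsto (fun ε : ℝ => ind P (x + ε • n)) (𝓝[>] 0) (𝓝 Lp)) ∧
        (∃ Lm, Tendsto (fun ε : ℝ => ind P (x - ε • n)) (𝓝[>] 0) (𝓝 Lm))) ∧
    ∃ (k : ℕ) (β : Fin k → ℝ) (Q : Fin k → Set (Euc d)),
      (∀ i, IsConvexPolyhedron (Q i) ∧ Q i ⊆ {x : Euc d | ⟪n, x⟫ = c}) ∧
      ∀ᵐ x ∂((μH[(d : ℝ) - 1] : Measure (Euc d)).restrict {x : Euc d | ⟪n, x⟫ = c}),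
        ∀ Lp Lm : ℝ,
          Tendsto (fun ε : ℝ => ind P (x + ε • n)) (𝓝[>] 0) (𝓝 Lp) →
          Tendsto (fun ε : ℝ => ind P (x - ε • n)) (𝓝[>] 0) (𝓝 Lm) →
          Lp - Lm = ∑ i, β i * ind (Q i) x := by
  classical
  have hn0 : n ≠ 0 := by intro h; rw [h, norm_zero] at hn; norm_num at hn
  obtain ⟨m, Qf, hQf, rfl⟩ := hP
  choose N A B hAB using hQf
  have hA : ∀ j i, A j i ≠ 0 := fun j => (hAB j).1
  have hQeq : ∀ j, Qf j = {x | ∀ i, ⟪A j i, x⟫ ≤ B j i} := fun j => (hAB j).2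
  set H : Set (Euc d) := {x : Euc d | ⟪n, x⟫ = c} with hH
  set μ : Measure (Euc d) := (μH[(d : ℝ) - 1] : Measure (Euc d)) with hμ
  -- limiting sets
  set Qc : Euc d → Fin m → Set (Euc d) :=
    fun v j => {x | ∀ i, scond v (A j i) (B j i) x} with hQc
  -- eventual membership
  have ev : ∀ (x v : Euc d), ∀ᶠ ε in 𝓝[>] (0 : ℝ),
      ((x + ε • v ∈ ⋃ j, Qf j) ↔ x ∈ ⋃ j, Qc v j) := by
    intro x v
    have hj : ∀ j, ∀ᶠ ε in 𝓝[>] (0 : ℝ), (x + ε • v ∈ Qf j ↔ x ∈ Qc v j) := by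
      intro j
      have := Filter.eventually_all.2 (fun i => ev_half v (A j i) x (B j i))
      refine this.mono fun ε hε => ?_
      rw [hQeq j]
      simp only [Set.mem_setOf_eq, hQc]
      exact forall_congr' hε
    refine (Filter.eventually_all.2 hj).mono fun ε hε => ?_
    simp only [Set.mem_iUnion]
    exact exists_congr hε
  -- tendsto
  have tnd : ∀ (x v : Euc d), Tendsto (fun ε : ℝ => ind (⋃ j, Qf j) (x + ε • v))
      (𝓝[>] 0) (𝓝 (ind (⋃ j, Qc v j) x)) := by
    intro x v
    refine Tendsto.congr' ?_ (tendsto_const_nhds (α := ℝ) (f := 𝓝[>] (0:ℝ)))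
    exact (ev x v).mono fun ε hε => ind_congr hε.symm
  have hminus : ∀ x : Euc d, (fun ε : ℝ => ind (⋃ j, Qf j) (x - ε • n)) =
      fun ε : ℝ => ind (⋃ j, Qf j) (x + ε • (-n)) := by
    intro x; funext ε; congr 1; rw [smul_neg, ← sub_eq_add_neg]
  constructor
  · refine Filter.Eventually.of_forall fun x =>
      ⟨⟨_, tnd x n⟩, ⟨ind (⋃ j, Qc (-n) j) x, ?_⟩⟩
    rw [hminus x]; exact tnd x (-n)
  -- part 2
  · -- the constant (type-A) conditions
    set C : Euc d → Fin m → Prop :=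
      fun v j => ∀ i, (∃ t : ℝ, A j i = t • n) → scond v (A j i) (B j i) (c • n) with hC
    set S : Euc d → Fin m → Set (Euc d) :=
      fun v j => if C v j then Qf j ∩ H else ∅ with hS
    have hSpoly : ∀ v j, IsConvexPolyhedron (S v j) ∧ S v j ⊆ H := by
      intro v j
      simp only [hS]
      split_ifs with h
      · exact ⟨cp_inter ⟨N j, A j, B j, hA j, hQeq j⟩ (cp_hyperplane hn0 c),
          Set.inter_subset_right⟩
      · exact ⟨cp_empty hn0, Set.empty_subset _⟩
    obtain ⟨k, β, Q, hQ, e⟩ := combo_sub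
      (combo_union m (S n) (hSpoly n)) (combo_union m (S (-n)) (hSpoly (-n)))
    refine ⟨k, β, Q, hQ, ?_⟩
    -- the null set
    set 𝒩 : Set (Euc d) := ⋃ j, ⋃ i, if (∃ t : ℝ, A j i = t • n) then ∅
      else {x : Euc d | ⟪n, x⟫ = c ∧ ⟪A j i, x⟫ = B j i} with h𝒩def
    have h𝒩 : μ 𝒩 = 0 := by
      refine measure_iUnion_null fun j => measure_iUnion_null fun i => ?_
      split_ifs with h
      · exact measure_empty
      · exact null_inter n (A j i) hn h (B j i) c
    have hae0 : ∀ᵐ x ∂μ, x ∉ 𝒩 := by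
      rw [ae_iff]
      simp only [not_not, Set.setOf_mem_eq]
      exact h𝒩
    have Hmeas : MeasurableSet H := by
      have : IsClosed H := isClosed_eq (continuous_const.inner continuous_id) continuous_const
      exact this.measurableSet
    rw [ae_restrict_iff' Hmeas]
    filter_upwards [hae0] with x hxN hxH Lp Lm hLp hLm
    -- identify the limits
    have hLp' : Lp = ind (⋃ j, Qc n j) x := tendsto_nhds_unique hLp (tnd x n)
    have hLm' : Lm = ind (⋃ j, Qc (-n) j) x := by
      rw [hminus x] at hLm
      exact tendsto_nhds_unique hLm (tnd x (-n))
    -- transfer lemma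
    have hxc : ⟪n, x⟫ = c := hxH
    have htr : ∀ (t b' : ℝ) (v : Euc d),
        scond v (t • n) b' x ↔ scond v (t • n) b' (c • n) := by
      intro t b' v
      have h1 : ⟪t • n, x⟫ = t * c := by rw [real_inner_smul_left, hxc]
      have h2 : ⟪t • n, c • n⟫ = t * c := by
        rw [real_inner_smul_left, real_inner_smul_right, real_inner_self_eq_norm_sq, hn]
        ring
      rw [scond, scond, h1, h2]
    have hB' : ∀ j i, (¬ ∃ t : ℝ, A j i = t • n) → ⟪A j i, x⟫ ≠ B j i := by
      intro j i hnab heq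
      exact hxN (Set.mem_iUnion.2 ⟨j, Set.mem_iUnion.2 ⟨i, by
        rw [if_neg hnab]; exact ⟨hxc, heq⟩⟩⟩)
    -- key pointwise identification
    have key : ∀ (v : Euc d) (j : Fin m), (x ∈ Qc v j ↔ x ∈ S v j) := by
      intro v j
      simp only [hS]
      by_cases hCvj : C v j
      · rw [if_pos hCvj]
        constructor
        · intro hx
          refine ⟨?_, hxH⟩
          rw [hQeq j]
          intro i
          rcases hx i with h | ⟨h, -⟩
          · exact h.le
          · exact h.le
        · rintro ⟨hq, -⟩
          intro i
          by_cases hT : ∃ t : ℝ, A j i = t • n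
          · obtain ⟨t, ht⟩ := hT
            have := hCvj i ⟨t, ht⟩
            rw [ht] at this ⊢
            exact (htr t (B j i) v).2 this
          · have hne := hB' j i hT
            have hle : ⟪A j i, x⟫ ≤ B j i := by
              rw [hQeq j] at hq; exact hq i
            exact Or.inl (lt_of_le_of_ne hle hne)
      · rw [if_neg hCvj]
        simp only [Set.mem_empty_iff_false, iff_false]
        intro hx
        apply hCvj
        rintro i ⟨t, ht⟩
        have := hx i
        rw [ht] at this ⊢
        exact (htr t (B j i) v).1 this
    have keyU : ∀ v : Euc d, ((x ∈ ⋃ j, Qc v j) ↔ x ∈ ⋃ j, S v j) := by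
      intro v
      simp only [Set.mem_iUnion]
      exact exists_congr fun j => key v j
    rw [hLp', hLm', ind_congr (keyU n), ind_congr (keyU (-n))]
    exact e x
end
end
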